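/- In the setting of the previous Grönwall bound, with additionally ‖D²V(x)‖ ≤ C on X, the second derivative of the flow satisfies sup_{x∈X} ‖D²φ_t(x)‖ ≤ C t e^{3Ct} for all t ≥ 0. -/

import Mathlib

open Real

lemma norm_bilinearComp_le' {E F G : Type*} [NormedAddCommGroup E] [NormedAddCommGroup F]
    [NormedAddCommGroup G] [NormedSpace ℝ E] [NormedSpace ℝ F] [NormedSpace ℝ G]
    (A : E →L[ℝ] E →L[ℝ] G) (P Q : F →L[ℝ] E) :
    ‖A.bilinearComp P Q‖ ≤ ‖A‖ * ‖P‖ * ‖Q‖ := by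
  refine ContinuousLinearMap.opNorm_le_bound _ (by positivity) fun u => ?_
  refine ContinuousLinearMap.opNorm_le_bound _ (by positivity) fun v => ?_
  simp only [ContinuousLinearMap.bilinearComp_apply]
  calc ‖A (P u) (Q v)‖ ≤ ‖A (P u)‖ * ‖Q v‖ := ContinuousLinearMap.le_opNorm _ _
    _ ≤ (‖A‖ * ‖P u‖) * (‖Q‖ * ‖v‖) := by
        gcongr
        · exact ContinuousLinearMap.le_opNorm _ _
        · exact ContinuousLinearMap.le_opNorm _ _
    _ ≤ (‖A‖ * (‖P‖ * ‖u‖)) * (‖Q‖ * ‖v‖) := by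
        gcongr; exact ContinuousLinearMap.le_opNorm _ _
    _ = ‖A‖ * ‖P‖ * ‖Q‖ * ‖u‖ * ‖v‖ := by ring

lemma norm_compL_apply_le' {E : Type*} [NormedAddCommGroup E] [NormedSpace ℝ E]
    (A : E →L[ℝ] E) :
    ‖ContinuousLinearMap.compL ℝ E E E A‖ ≤ ‖A‖ := by
  refine ContinuousLinearMap.opNorm_le_bound _ (norm_nonneg _) fun B => ?_
  exact ContinuousLinearMap.opNorm_comp_le _ _

lemma exp_sub_one_le_mul_exp {y : ℝ} (hy : 0 ≤ y) : Real.exp y - 1 ≤ y * Real.exp y := by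
  have h := Real.add_one_le_exp (-y)
  have hpos : (0:ℝ) < Real.exp y := Real.exp_pos y
  have h2 : Real.exp y * (-y + 1) ≤ 1 := by
    have h3 := mul_le_mul_of_nonneg_left h hpos.le
    rwa [← Real.exp_add, add_neg_cancel, Real.exp_zero] at h3
  nlinarith

set_option maxHeartbeats 1000000 in
set_option synthInstance.maxHeartbeats 200000 in
/-- Grönwall bound on the second derivative of the flow: if `‖V‖, ‖DV‖, ‖D²V‖ ≤ C` on a
flow-invariant set `X`, `D t = Dφ_t(x)` solves the variational equation (so `‖D t‖ ≤ e^{Ct}`),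
and `B t = D²φ_t(x)` solves the second variational equation, then `‖D²φ_t(x)‖ ≤ C t e^{3Ct}`
for all `x ∈ X` and `t ≥ 0`. -/
theorem flow_second_deriv_bound {d : ℕ} (C : ℝ) (hC : 0 ≤ C)
    (V : EuclideanSpace ℝ (Fin d) → EuclideanSpace ℝ (Fin d))
    (X : Set (EuclideanSpace ℝ (Fin d)))
    (φ : ℝ → EuclideanSpace ℝ (Fin d) → EuclideanSpace ℝ (Fin d))
    (hφ0 : ∀ x, φ 0 x = x)
    (hφ : ∀ x, ∀ t : ℝ, HasDerivAt (fun s => φ s x) (V (φ t x)) t)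
    (hXinv : ∀ x ∈ X, ∀ t ≥ (0 : ℝ), φ t x ∈ X)
    (hV : ∀ x ∈ X, ‖V x‖ ≤ C)
    (hDV : ∀ x ∈ X, ‖fderiv ℝ V x‖ ≤ C)
    (hD2V : ∀ x ∈ X, ‖fderiv ℝ (fderiv ℝ V) x‖ ≤ C) :
    ∀ x ∈ X,
    ∀ (D : ℝ → EuclideanSpace ℝ (Fin d) →L[ℝ] EuclideanSpace ℝ (Fin d)),
      D 0 = ContinuousLinearMap.id ℝ (EuclideanSpace ℝ (Fin d)) →
      (∀ t : ℝ, HasDerivAt D ((fderiv ℝ V (φ t x)).comp (D t)) t) →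
    ∀ (B : ℝ → EuclideanSpace ℝ (Fin d) →L[ℝ]
        EuclideanSpace ℝ (Fin d) →L[ℝ] EuclideanSpace ℝ (Fin d)),
      B 0 = 0 →
      (∀ t : ℝ, HasDerivAt B
        (((fderiv ℝ (fderiv ℝ V) (φ t x)).bilinearComp (D t) (D t)) +
          (ContinuousLinearMap.compL ℝ (EuclideanSpace ℝ (Fin d)) (EuclideanSpace ℝ (Fin d))
            (EuclideanSpace ℝ (Fin d)) (fderiv ℝ V (φ t x))).comp (B t)) t) →
      ∀ t ≥ (0 : ℝ), ‖B t‖ ≤ C * t * Real.exp (3 * C * t) := by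
  intro x hx D hD0 hD' B hB0 hB' t ht
  -- Step 1: bound on ‖D s‖ for s ∈ [0, t]
  have hDcont : ContinuousOn D (Set.Icc 0 t) :=
    fun s _ => ((hD' s).continuousAt).continuousWithinAt
  have hDbound : ∀ s ∈ Set.Icc (0:ℝ) t, ‖D s‖ ≤ Real.exp (C * s) := by
    intro s hs
    have := norm_le_gronwallBound_of_norm_deriv_right_le (δ := 1) (K := C) (ε := 0)
      (a := 0) (b := t) hDcont
      (fun u hu => (hD' u).hasDerivWithinAt)
      (by rw [hD0]; exact ContinuousLinearMap.norm_id_le) ?_ s hs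
    · rwa [sub_zero, gronwallBound_ε0, one_mul] at this
    · intro u hu
      have hmem : φ u x ∈ X := hXinv x hx u hu.1
      calc ‖(fderiv ℝ V (φ u x)).comp (D u)‖
          ≤ ‖fderiv ℝ V (φ u x)‖ * ‖D u‖ := ContinuousLinearMap.opNorm_comp_le _ _
        _ ≤ C * ‖D u‖ + 0 := by
            rw [add_zero]; exact mul_le_mul_of_nonneg_right (hDV _ hmem) (norm_nonneg _)
  -- Step 2: Grönwall for B
  have hBcont : ContinuousOn B (Set.Icc 0 t) :=
    fun s _ => (HasDerivAt.continuousAt (F := EuclideanSpace ℝ (Fin d) →L[ℝ] EuclideanSpace ℝ (Fin d) →L[ℝ] EuclideanSpace ℝ (Fin d)) (hB' s)).continuousWithinAt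
  have key := norm_le_gronwallBound_of_norm_deriv_right_le (E := EuclideanSpace ℝ (Fin d) →L[ℝ] EuclideanSpace ℝ (Fin d) →L[ℝ] EuclideanSpace ℝ (Fin d)) (f := B) (δ := 0) (K := C)
      (ε := C * Real.exp (2 * C * t)) (a := 0) (b := t) hBcont
      (fun u hu => (hB' u).hasDerivWithinAt)
      (by rw [hB0, ContinuousLinearMap.opNorm_zero]) ?_ t (Set.right_mem_Icc.2 ht)
  · rw [sub_zero] at key
    refine key.trans ?_
    by_cases hC0 : C = 0
    · subst hC0
      simp [gronwallBound]
    · rw [gronwallBound_of_K_ne_0 hC0]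
      have h1 : Real.exp (C * t) - 1 ≤ C * t * Real.exp (C * t) := by
        have := exp_sub_one_le_mul_exp (y := C * t) (by positivity)
        linarith
      have h2 : (0:ℝ) ≤ Real.exp (2 * C * t) := (Real.exp_pos _).le
      calc (0:ℝ) * Real.exp (C * t) + C * Real.exp (2 * C * t) / C * (Real.exp (C * t) - 1)
          = Real.exp (2 * C * t) * (Real.exp (C * t) - 1) := by
            field_simp
            ring
        _ ≤ Real.exp (2 * C * t) * (C * t * Real.exp (C * t)) := by
            exact mul_le_mul_of_nonneg_left h1 h2
        _ = C * t * (Real.exp (2 * C * t) * Real.exp (C * t)) := by ring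
        _ = C * t * Real.exp (3 * C * t) := by
            rw [← Real.exp_add]; ring_nf
  · intro u hu
    have hmem : φ u x ∈ X := hXinv x hx u hu.1
    have hDu : ‖D u‖ ≤ Real.exp (C * t) := by
      refine (hDbound u ⟨hu.1, hu.2.le⟩).trans ?_
      exact Real.exp_le_exp.2 (by nlinarith [hu.1, hu.2.le])
    have hDu0 : (0:ℝ) ≤ Real.exp (C * t) := (Real.exp_pos _).le
    calc ‖(fderiv ℝ (fderiv ℝ V) (φ u x)).bilinearComp (D u) (D u) +
          (ContinuousLinearMap.compL ℝ (EuclideanSpace ℝ (Fin d)) (EuclideanSpace ℝ (Fin d))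
            (EuclideanSpace ℝ (Fin d)) (fderiv ℝ V (φ u x))).comp (B u)‖
        ≤ ‖(fderiv ℝ (fderiv ℝ V) (φ u x)).bilinearComp (D u) (D u)‖ +
          ‖(ContinuousLinearMap.compL ℝ (EuclideanSpace ℝ (Fin d)) (EuclideanSpace ℝ (Fin d))
            (EuclideanSpace ℝ (Fin d)) (fderiv ℝ V (φ u x))).comp (B u)‖ := norm_add_le _ _
      _ ≤ ‖fderiv ℝ (fderiv ℝ V) (φ u x)‖ * ‖D u‖ * ‖D u‖ +
          ‖ContinuousLinearMap.compL ℝ (EuclideanSpace ℝ (Fin d)) (EuclideanSpace ℝ (Fin d))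
            (EuclideanSpace ℝ (Fin d)) (fderiv ℝ V (φ u x))‖ * ‖B u‖ := by
          gcongr
          · exact norm_bilinearComp_le' _ _ _
          · exact ContinuousLinearMap.opNorm_comp_le _ _
      _ ≤ C * Real.exp (C * t) * Real.exp (C * t) + C * ‖B u‖ := by
          gcongr
          · exact hD2V _ hmem
          · exact (norm_compL_apply_le' _).trans (hDV _ hmem)
      _ = C * ‖B u‖ + C * Real.exp (2 * C * t) := by
          rw [show (2:ℝ) * C * t = C * t + C * t by ring, Real.exp_add]; ring
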